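/- For every natural number k, there is a bijection between the set of leaves of the action graph A_k (i.e., the vertices of A_k labeled k) and the set of planar rooted trees with k edges. -/

import Mathlib

/-- Vertices of action graphs: the root (labeled 0), or a vertex created at some
step, recorded together with its label and the path (head and tail of the vertex
sequence) that created it. -/
inductive AGVert : Type
  | root : AGVert
  | node (lbl : ℕ) (head : AGVert) (tail : List AGVert) : AGVert

/-- The label of a vertex. -/
def AGVert.label : AGVert → ℕ
  | .root => 0
  | .node l _ _ => l

/-- `IsPath E a l` says that `a :: l` is the vertex sequence of a directed path in a
graph with edge set `E` (the trivial path at `a` when `l = []`). -/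
def IsPath (E : Set (AGVert × AGVert)) (a : AGVert) (l : List AGVert) : Prop :=
  List.Chain (fun x y => (x, y) ∈ E) a l

/-- The terminal vertex of the path with vertex sequence `a :: l`. -/
def pathLast (a : AGVert) (l : List AGVert) : AGVert :=
  (a :: l).getLast (List.cons_ne_nil a l)

/-- The action graph `A k`, given by its set of vertices together with its set of
(nontrivial, directed) edges.  `A 0` has one vertex (labeled 0) and no nontrivial
edges; `A (k+1)` is obtained from `A k` by adjoining, for each directed path
(including trivial ones) in `A k` whose terminal vertex is labeled `k`, a new vertex
labeled `k+1` and a new edge from the initial vertex of the path to the new vertex. -/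
def actionGraph : ℕ → Set AGVert × Set (AGVert × AGVert)
  | 0 => ({AGVert.root}, ∅)
  | k + 1 =>
    let G := actionGraph k
    (G.1 ∪ { w | ∃ a l, a ∈ G.1 ∧ IsPath G.2 a l ∧ (pathLast a l).label = k ∧
        w = AGVert.node (k + 1) a l },
     G.2 ∪ { e | ∃ a l, a ∈ G.1 ∧ IsPath G.2 a l ∧ (pathLast a l).label = k ∧
        e = (a, AGVert.node (k + 1) a l) })

/-- A planar rooted tree: each vertex carries a linearly ordered (left-to-right) list of
children, and two planar rooted trees are equal exactly when there is a root-preserving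
isomorphism respecting the orderings of children. -/
inductive PlanarRootedTree : Type
  | node : List PlanarRootedTree → PlanarRootedTree

/-- The number of edges of a planar rooted tree. -/
def PlanarRootedTree.numEdges : PlanarRootedTree → ℕ
  | .node cs => cs.length + (cs.attach.map fun c => PlanarRootedTree.numEdges c.1).sum
decreasing_by
  cases c with
  | mk c hc =>
    exact Nat.lt_of_lt_of_le (List.sizeOf_lt_of_mem hc) (by simp [Nat.le_add_left])


inductive B : Type
  | nil : B
  | br (l r : B) : B
deriving DecidableEq

namespace B

def bsize : B → ℕ
  | nil => 0
  | br l r => bsize l + bsize r + 1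

def brlen : B → ℕ
  | nil => 0
  | br l nil => brlen l + 1
  | br _ (br r1 r2) => brlen (br r1 r2)

def bapp : B → B
  | nil => br nil nil
  | br l r => br l (bapp r)

def batt : ℕ → B → B
  | 0, b => bapp b
  | _ + 1, nil => nil
  | d + 1, br l nil => br (batt d l) nil
  | d + 1, br l (br r1 r2) => br l (batt (d + 1) (br r1 r2))

def bdet : B → ℕ × B
  | nil => (0, nil)
  | br nil nil => (0, nil)
  | br (br a b) nil =>
    let p := bdet (br a b); (p.1 + 1, br p.2 nil)
  | br l (br r1 r2) =>
    let p := bdet (br r1 r2); (p.1, br l p.2)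

@[simp] theorem bdet_nil : bdet nil = (0, nil) := rfl
@[simp] theorem bdet_brnilnil : bdet (br nil nil) = (0, nil) := rfl
@[simp] theorem bdet_brbrnil (a b : B) :
    bdet (br (br a b) nil) = ((bdet (br a b)).1 + 1, br (bdet (br a b)).2 nil) := by rw [bdet]
@[simp] theorem bdet_br_br (l r1 r2 : B) :
    bdet (br l (br r1 r2)) = ((bdet (br r1 r2)).1, br l (bdet (br r1 r2)).2) := by rw [bdet]

@[simp] theorem batt_zero (b : B) : batt 0 b = bapp b := by cases b <;> rfl
@[simp] theorem batt_succ_nil (d : ℕ) : batt (d + 1) nil = nil := rfl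
@[simp] theorem batt_succ_brnil (d : ℕ) (l : B) :
    batt (d + 1) (br l nil) = br (batt d l) nil := rfl
theorem batt_succ_br (d : ℕ) (l r : B) (hr : r ≠ nil) :
    batt (d + 1) (br l r) = br l (batt (d + 1) r) := by
  cases r with
  | nil => exact absurd rfl hr
  | br r1 r2 => rfl

@[simp] theorem brlen_nil : brlen nil = 0 := rfl
@[simp] theorem brlen_br_nil (l : B) : brlen (br l nil) = brlen l + 1 := rfl
theorem brlen_br (l r : B) (hr : r ≠ nil) : brlen (br l r) = brlen r := by
  cases r with
  | nil => exact absurd rfl hr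
  | br r1 r2 => rfl

@[simp] theorem bapp_ne_nil (b : B) : bapp b ≠ nil := by
  cases b <;> simp [bapp]

theorem batt_ne_nil (d : ℕ) (b : B) : batt d b = nil → d = 0 ∧ b = nil ∨ brlen b < d := by
  match d, b with
  | 0, b => simp [batt_zero]
  | d + 1, nil => simp
  | d + 1, br l nil => simp
  | d + 1, br l (br r1 r2) => simp [batt_succ_br]

theorem batt_ne_nil' (d : ℕ) (b : B) (h : d ≤ brlen b) : batt d b ≠ nil := by
  intro hn
  rcases batt_ne_nil d b hn with ⟨rfl, rfl⟩ | h2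
  · simp [batt_zero, bapp] at hn
  · omega

theorem brlen_bapp (b : B) : brlen (bapp b) = 1 := by
  induction b with
  | nil => rfl
  | br l r ihl ihr =>
    rw [show bapp (br l r) = br l (bapp r) from rfl, brlen_br _ _ (bapp_ne_nil r), ihr]

theorem brlen_batt (d : ℕ) (b : B) (h : d ≤ brlen b) : brlen (batt d b) = d + 1 := by
  match d, b with
  | 0, b => rw [batt_zero]; exact brlen_bapp b
  | d + 1, nil => simp at h
  | d + 1, br l nil =>
    have h' : d ≤ brlen l := by simpa using h
    rw [batt_succ_brnil, brlen_br_nil, brlen_batt d l h']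
  | d + 1, br l (br r1 r2) =>
    have h' : d + 1 ≤ brlen (br r1 r2) := by rwa [brlen_br _ _ (by simp)] at h
    rw [batt_succ_br _ _ _ (by simp), brlen_br _ _ (batt_ne_nil' _ _ h'),
      brlen_batt (d + 1) _ h']

theorem bsize_bapp (b : B) : bsize (bapp b) = bsize b + 1 := by
  induction b with
  | nil => rfl
  | br l r ihl ihr => show bsize (br l (bapp r)) = _; simp [bsize, ihr]; omega

theorem bsize_batt (d : ℕ) (b : B) (h : d ≤ brlen b) : bsize (batt d b) = bsize b + 1 := by
  match d, b with
  | 0, b => rw [batt_zero]; exact bsize_bapp b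
  | d + 1, nil => simp at h
  | d + 1, br l nil =>
    have h' : d ≤ brlen l := by simpa using h
    rw [batt_succ_brnil]
    simp [bsize, bsize_batt d l h']
  | d + 1, br l (br r1 r2) =>
    have h' : d + 1 ≤ brlen (br r1 r2) := by rwa [brlen_br _ _ (by simp)] at h
    rw [batt_succ_br _ _ _ (by simp)]
    simp [bsize, bsize_batt (d + 1) _ h']
    omega

@[simp] theorem bdet_bapp (b : B) : bdet (bapp b) = (0, b) := by
  induction b with
  | nil => rfl
  | br l r ihl ihr =>
    show bdet (br l (bapp r)) = _
    cases hr : bapp r with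
    | nil => exact absurd hr (bapp_ne_nil r)
    | br x y => rw [bdet_br_br, ← hr, ihr]

theorem bdet_batt (d : ℕ) (b : B) (h : d ≤ brlen b) : bdet (batt d b) = (d, b) := by
  match d, b with
  | 0, b => rw [batt_zero]; exact bdet_bapp b
  | d + 1, nil => simp at h
  | d + 1, br l nil =>
    have h' : d ≤ brlen l := by simpa using h
    rw [batt_succ_brnil]
    cases hb : batt d l with
    | nil => exact absurd hb (batt_ne_nil' d l h')
    | br x y => rw [bdet_brbrnil, ← hb, bdet_batt d l h']
  | d + 1, br l (br r1 r2) =>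
    have h' : d + 1 ≤ brlen (br r1 r2) := by rwa [brlen_br _ _ (by simp)] at h
    rw [batt_succ_br _ _ _ (by simp)]
    cases hb : batt (d + 1) (br r1 r2) with
    | nil => exact absurd hb (batt_ne_nil' _ _ h')
    | br x y => rw [bdet_br_br, ← hb, bdet_batt (d + 1) _ h']

theorem batt_bdet : ∀ (b : B), b ≠ nil →
    ∀ d b', bdet b = (d, b') → d ≤ brlen b' ∧ batt d b' = b ∧ (d ≠ 0 → b' ≠ nil) := by
  intro b
  induction b with
  | nil => intro h; exact absurd rfl h
  | br l r ihl ihr =>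
    intro _ d b' hdb
    cases r with
    | nil =>
      cases l with
      | nil =>
        obtain ⟨rfl, rfl⟩ : d = 0 ∧ b' = nil := by
          simpa [bdet, Prod.ext_iff] using hdb.symm
        exact ⟨le_refl _, rfl, by simp⟩
      | br a c =>
        obtain ⟨d0, hd0⟩ : ∃ p, bdet (br a c) = p := ⟨_, rfl⟩
        obtain ⟨hle, hba, hnn⟩ := ihl (by simp) d0.1 d0.2 (by rw [hd0])
        have : d = d0.1 + 1 ∧ b' = br d0.2 nil := by
          rw [bdet_brbrnil, hd0] at hdb
          exact ⟨(Prod.ext_iff.mp hdb.symm).1, (Prod.ext_iff.mp hdb.symm).2⟩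
        obtain ⟨rfl, rfl⟩ := this
        refine ⟨by simpa using hle, ?_, by simp⟩
        rw [batt_succ_brnil, hba]
    | br r1 r2 =>
      obtain ⟨d0, hd0⟩ : ∃ p, bdet (br r1 r2) = p := ⟨_, rfl⟩
      obtain ⟨hle, hba, hnn⟩ := ihr (by simp) d0.1 d0.2 (by rw [hd0])
      have : d = d0.1 ∧ b' = br l d0.2 := by
        rw [bdet_br_br, hd0] at hdb
        exact ⟨(Prod.ext_iff.mp hdb.symm).1, (Prod.ext_iff.mp hdb.symm).2⟩
      obtain ⟨rfl, rfl⟩ := this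
      refine ⟨?_, ?_, by simp⟩
      · cases hn : d0.2 with
        | nil => have := hn ▸ hle; simp at this; omega
        | br x y => rw [brlen_br _ _ (by simp [hn])]; exact hn ▸ hle
      · cases hd : d0.1 with
        | zero =>
          rw [batt_zero]
          show br l (bapp d0.2) = _
          rw [show bapp d0.2 = batt 0 d0.2 from (batt_zero _).symm, ← hd, hba]
        | succ n =>
          rw [batt_succ_br _ _ _ (hnn (by omega)), ← hd, hba]

theorem bsize_bdet (b : B) (h : b ≠ nil) : bsize (bdet b).2 + 1 = bsize b := by
  obtain ⟨hle, hba, -⟩ := batt_bdet b h (bdet b).1 (bdet b).2 rfl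
  conv_rhs => rw [← hba]
  rw [bsize_batt _ _ hle]

end B

namespace Bridge

def forestToB : List PlanarRootedTree → B
  | [] => B.nil
  | .node cs :: rest => B.br (forestToB cs) (forestToB rest)
decreasing_by
  all_goals (simp; try omega)

theorem forestToB_nil : forestToB [] = B.nil := by rw [forestToB]

theorem forestToB_cons (cs rest) :
    forestToB (.node cs :: rest) = B.br (forestToB cs) (forestToB rest) := by rw [forestToB]

def bToForest : B → List PlanarRootedTree
  | .nil => []
  | .br l r => .node (bToForest l) :: bToForest r

theorem bToForest_forestToB : ∀ F, bToForest (forestToB F) = F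
  | [] => by rw [forestToB_nil]; rfl
  | .node cs :: rest => by
    rw [forestToB_cons, bToForest, bToForest_forestToB cs, bToForest_forestToB rest]
decreasing_by
  all_goals (simp; try omega)

theorem forestToB_bToForest : ∀ b, forestToB (bToForest b) = b
  | .nil => by rw [bToForest, forestToB_nil]
  | .br l r => by
    rw [bToForest, forestToB_cons, forestToB_bToForest l, forestToB_bToForest r]

def esize (F : List PlanarRootedTree) : ℕ :=
  F.length + (F.map PlanarRootedTree.numEdges).sum

theorem numEdges_eq (cs : List PlanarRootedTree) :
    (PlanarRootedTree.node cs).numEdges = esize cs := by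
  rw [PlanarRootedTree.numEdges, esize]
  congr 1
  rw [List.attach_map_val]

theorem bsize_forestToB : ∀ F, B.bsize (forestToB F) = esize F
  | [] => by rw [forestToB_nil]; rfl
  | .node cs :: rest => by
    rw [forestToB_cons, B.bsize, bsize_forestToB cs, bsize_forestToB rest]
    simp [esize, numEdges_eq]
    omega
decreasing_by
  all_goals (simp; try omega)

def treeEquivB : PlanarRootedTree ≃ B where
  toFun t := match t with | .node cs => forestToB cs
  invFun b := .node (bToForest b)
  left_inv t := by cases t with | node cs => simp [bToForest_forestToB]
  right_inv b := forestToB_bToForest b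

theorem numEdges_treeEquivB (t : PlanarRootedTree) :
    B.bsize (treeEquivB t) = t.numEdges := by
  cases t with | node cs => rw [numEdges_eq]; exact bsize_forestToB cs

def subEquiv (k : ℕ) : {t : PlanarRootedTree // t.numEdges = k} ≃ {b : B // B.bsize b = k} :=
  Equiv.subtypeEquiv treeEquivB (fun t => by rw [numEdges_treeEquivB])

end Bridge

namespace AGP

open AGVert

theorem av_succ (k : ℕ) : (actionGraph (k+1)).1 = (actionGraph k).1 ∪
    {w | ∃ a l, a ∈ (actionGraph k).1 ∧ IsPath (actionGraph k).2 a l ∧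
      (pathLast a l).label = k ∧ w = AGVert.node (k+1) a l} := rfl

theorem ae_succ (k : ℕ) : (actionGraph (k+1)).2 = (actionGraph k).2 ∪
    {e | ∃ a l, a ∈ (actionGraph k).1 ∧ IsPath (actionGraph k).2 a l ∧
      (pathLast a l).label = k ∧ e = (a, AGVert.node (k+1) a l)} := rfl

theorem av_zero : (actionGraph 0).1 = {AGVert.root} := rfl
theorem ae_zero : (actionGraph 0).2 = ∅ := rfl

theorem av_mono {m k : ℕ} (h : m ≤ k) : (actionGraph m).1 ⊆ (actionGraph k).1 := by
  induction k with
  | zero => rw [Nat.le_zero.mp h]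
  | succ k ih =>
    rcases Nat.lt_or_ge m (k+1) with h' | h'
    · exact (ih (by omega)).trans (by rw [av_succ]; exact Set.subset_union_left)
    · rw [Nat.le_antisymm h h']

theorem ae_mono {m k : ℕ} (h : m ≤ k) : (actionGraph m).2 ⊆ (actionGraph k).2 := by
  induction k with
  | zero => rw [Nat.le_zero.mp h]
  | succ k ih =>
    rcases Nat.lt_or_ge m (k+1) with h' | h'
    · exact (ih (by omega)).trans (by rw [ae_succ]; exact Set.subset_union_left)
    · rw [Nat.le_antisymm h h']

theorem label_le {k : ℕ} {v : AGVert} (h : v ∈ (actionGraph k).1) : v.label ≤ k := by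
  induction k with
  | zero => rw [av_zero] at h; simp at h; simp [h, AGVert.label]
  | succ k ih =>
    rw [av_succ] at h
    rcases h with h | h
    · exact (ih h).trans (by omega)
    · obtain ⟨a, l, -, -, -, rfl⟩ := h
      simp [AGVert.label]

theorem mem_node_iff {k m : ℕ} {a : AGVert} {l : List AGVert} :
    AGVert.node (m+1) a l ∈ (actionGraph k).1 ↔
      m + 1 ≤ k ∧ a ∈ (actionGraph m).1 ∧ IsPath (actionGraph m).2 a l ∧
        (pathLast a l).label = m := by
  induction k with
  | zero =>
    rw [av_zero]
    simp only [Set.mem_singleton_iff]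
    constructor
    · intro h; cases h
    · intro h; omega
  | succ k ih =>
    rw [av_succ]
    constructor
    · rintro (h | ⟨a', l', ha', hp', hl', heq⟩)
      · obtain ⟨h1, h2⟩ := ih.mp h
        exact ⟨by omega, h2⟩
      · obtain ⟨rfl, rfl, rfl⟩ : m = k ∧ a = a' ∧ l = l' := by
          injection heq with h1 h2 h3
          exact ⟨by omega, h2, h3⟩
        exact ⟨le_refl _, ha', hp', hl'⟩
    · rintro ⟨hk, ha, hp, hl⟩
      rcases Nat.lt_or_ge (m+1) (k+1) with h' | h'
      · exact Or.inl (ih.mpr ⟨by omega, ha, hp, hl⟩)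
      · have : m = k := by omega
        subst this
        exact Or.inr ⟨a, l, ha, hp, hl, rfl⟩

theorem node_zero_not_mem {k : ℕ} {a : AGVert} {l : List AGVert} :
    AGVert.node 0 a l ∉ (actionGraph k).1 := by
  induction k with
  | zero => rw [av_zero]; intro h; cases h
  | succ k ih =>
    rw [av_succ]
    rintro (h | ⟨a', l', -, -, -, heq⟩)
    · exact ih h
    · injection heq with h1 h2 h3; omega

theorem edge_iff {k : ℕ} {x y : AGVert} :
    (x, y) ∈ (actionGraph k).2 ↔
      ∃ m l, y = AGVert.node (m+1) x l ∧ AGVert.node (m+1) x l ∈ (actionGraph k).1 := by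
  induction k with
  | zero =>
    rw [ae_zero]
    simp only [Set.mem_empty_iff_false, false_iff]
    rintro ⟨m, l, -, hmem⟩
    exact absurd (mem_node_iff.mp hmem).1 (by omega)
  | succ k ih =>
    rw [ae_succ]
    constructor
    · rintro (h | ⟨a, l, ha, hp, hl, heq⟩)
      · obtain ⟨m, l, rfl, hmem⟩ := ih.mp h
        exact ⟨m, l, rfl, av_mono (by omega) hmem⟩
      · obtain ⟨rfl, rfl⟩ : x = a ∧ y = AGVert.node (k+1) a l := by
          injection heq with h1 h2
          exact ⟨h1, h2⟩
        exact ⟨k, l, rfl, mem_node_iff.mpr ⟨le_refl _, ha, hp, hl⟩⟩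
    · rintro ⟨m, l, rfl, hmem⟩
      obtain ⟨hk, ha, hp, hl⟩ := mem_node_iff.mp hmem
      rcases Nat.lt_or_ge (m+1) (k+1) with h' | h'
      · exact Or.inl (ih.mpr ⟨m, l, rfl, mem_node_iff.mpr ⟨by omega, ha, hp, hl⟩⟩)
      · have : m = k := by omega
        subst this
        exact Or.inr ⟨x, l, av_mono (by omega) ha, hp, hl, rfl⟩

/-- Depth of a vertex in the forest structure of the action graphs. -/
def AGdepth : AGVert → ℕ
  | .root => 0
  | .node _ a _ => AGdepth a + 1

/-- The chain of ancestors of a vertex, from the root down to the vertex itself. -/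
def chain : AGVert → List AGVert
  | .root => [.root]
  | .node j a l => chain a ++ [.node j a l]

theorem chain_ne_nil (v : AGVert) : chain v ≠ [] := by
  cases v <;> simp [chain]

theorem chain_concat (v : AGVert) : ∃ c, chain v = c ++ [v] := by
  cases v with
  | root => exact ⟨[], rfl⟩
  | node j a l => exact ⟨chain a, rfl⟩

theorem chain_length : ∀ (v : AGVert), (chain v).length = AGdepth v + 1
  | .root => rfl
  | .node j a l => by simp [chain, AGdepth, chain_length a]

theorem chain_getLast (v : AGVert) : (chain v).getLast (chain_ne_nil v) = v := by
  obtain ⟨c, hc⟩ := chain_concat v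
  simp [hc, List.getLast_concat]

theorem chain_mem {k : ℕ} : ∀ {v : AGVert}, v ∈ (actionGraph k).1 →
    ∀ x ∈ chain v, x ∈ (actionGraph k).1
  | .root, hv => by
    intro x hx
    simp [chain] at hx
    subst hx; exact hv
  | .node j a l, hv => by
    intro x hx
    cases j with
    | zero => exact absurd hv node_zero_not_mem
    | succ m =>
      obtain ⟨hk, ha, -, -⟩ := mem_node_iff.mp hv
      simp only [chain, List.mem_append, List.mem_singleton] at hx
      rcases hx with hx | rfl
      · exact chain_mem (av_mono (by omega) ha) x hx
      · exact hv

theorem chain_chain' {k : ℕ} : ∀ {v : AGVert}, v ∈ (actionGraph k).1 →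
    List.Chain' (fun x y => (x, y) ∈ (actionGraph k).2) (chain v)
  | .root, hv => by simp only [chain]; exact List.isChain_singleton _
  | .node j a l, hv => by
    cases j with
    | zero => exact absurd hv node_zero_not_mem
    | succ m =>
      obtain ⟨hk, ha, -, -⟩ := mem_node_iff.mp hv
      have ha' : a ∈ (actionGraph k).1 := av_mono (by omega) ha
      rw [chain, List.Chain', List.isChain_append]
      refine ⟨chain_chain' ha', List.isChain_singleton _, ?_⟩
      intro x hx y hy
      rw [List.getLast?_eq_getLast (chain_ne_nil a), chain_getLast] at hx
      simp at hx hy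
      subst hx; subst hy
      exact edge_iff.mpr ⟨m, l, rfl, hv⟩

@[simp] theorem pathLast_nil (a : AGVert) : pathLast a [] = a := rfl

theorem pathLast_concat (a y : AGVert) : ∀ (l : List AGVert), pathLast a (l ++ [y]) = y
  | [] => rfl
  | x :: l => pathLast_concat x y l

theorem getLast_suffix {a v : AGVert} {l s : List AGVert} (hs : (a :: l) <:+ s)
    (hne : s ≠ []) (hv : s.getLast hne = v) : pathLast a l = v := by
  obtain ⟨t, rfl⟩ := hs
  rw [← hv]
  exact (List.getLast_append_right (l := t) (l' := a :: l) (by simp)).symm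

theorem chain_concat_iff {R : AGVert → AGVert → Prop} {a b : AGVert} {l : List AGVert} :
    List.Chain R a (l ++ [b]) ↔ List.Chain R a l ∧ R (pathLast a l) b := by
  induction l generalizing a with
  | nil => simp [pathLast, List.Chain, List.isChain_pair]
  | cons x l ih =>
    simp only [List.Chain, List.cons_append, List.isChain_cons_cons] at ih ⊢; simp only [ih]
    have : pathLast a (x :: l) = pathLast x l := rfl
    rw [this]
    constructor
    · rintro ⟨h1, h2, h3⟩; exact ⟨⟨h1, h2⟩, h3⟩
    · rintro ⟨⟨h1, h2⟩, h3⟩; exact ⟨h1, h2, h3⟩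

theorem isPath_suffix {k : ℕ} {v a : AGVert} {l : List AGVert}
    (hv : v ∈ (actionGraph k).1) (hs : (a :: l) <:+ chain v) :
    IsPath (actionGraph k).2 a l ∧ pathLast a l = v :=
  ⟨((chain_chain' hv).suffix hs : List.Chain' _ (a :: l)),
    getLast_suffix hs (chain_ne_nil v) (chain_getLast v)⟩

theorem path_suffix_chain {k : ℕ} {v a : AGVert} {l : List AGVert}
    (hv : v ∈ (actionGraph k).1) (hp : IsPath (actionGraph k).2 a l)
    (hl : pathLast a l = v) : (a :: l) <:+ chain v := by
  induction l using List.reverseRecOn generalizing v with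
  | nil =>
    simp [pathLast] at hl
    subst hl
    obtain ⟨c, hc⟩ := chain_concat a
    exact ⟨c, hc.symm⟩
  | append_singleton l y ih =>
    rw [pathLast_concat] at hl
    subst hl
    rw [IsPath, chain_concat_iff] at hp
    obtain ⟨hp1, hp2⟩ := hp
    obtain ⟨m, l'', heq, hmem⟩ := edge_iff.mp hp2
    obtain ⟨hk, ha, -, -⟩ := mem_node_iff.mp hmem
    have hw : pathLast a l ∈ (actionGraph k).1 := av_mono (Nat.le_of_succ_le hk) ha
    obtain ⟨t, ht⟩ := ih hw hp1 rfl
    rw [heq]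
    refine ⟨t, ?_⟩
    show t ++ (a :: (l ++ [AGVert.node (m+1) (pathLast a l) l''])) =
      chain (AGVert.node (m+1) (pathLast a l) l'')
    rw [chain, ← ht]
    simp

theorem pathLast_mem {k : ℕ} {a : AGVert} {l : List AGVert}
    (ha : a ∈ (actionGraph k).1) (hp : IsPath (actionGraph k).2 a l) :
    pathLast a l ∈ (actionGraph k).1 := by
  induction l using List.reverseRecOn with
  | nil => simpa using ha
  | append_singleton l y ih =>
    rw [IsPath, chain_concat_iff] at hp
    obtain ⟨-, hp2⟩ := hp
    obtain ⟨m, l'', heq, hmem⟩ := edge_iff.mp hp2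
    rw [pathLast_concat, heq]
    exact hmem

theorem depth_of_suffix : ∀ (v a : AGVert) (l : List AGVert),
    (a :: l) <:+ chain v → AGdepth a + l.length = AGdepth v
  | .root, a, l, hs => by
    obtain ⟨t, ht⟩ := hs
    have hlen := congrArg List.length ht
    simp [chain] at hlen
    have ht' : t = [] := List.eq_nil_of_length_eq_zero (by omega)
    have hl : l = [] := List.eq_nil_of_length_eq_zero (by omega)
    subst ht'; subst hl
    simp only [List.nil_append, chain, List.cons.injEq] at ht
    rw [ht.1]; rfl
  | .node j p tl, a, l, hs => by
    cases l using List.reverseRecOn with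
    | nil =>
      have : a = AGVert.node j p tl :=
        getLast_suffix hs (chain_ne_nil _) (chain_getLast _)
      rw [this]
      simp
    | append_singleton l' y =>
      have hy : y = AGVert.node j p tl := by
        rw [← pathLast_concat a y l']
        exact getLast_suffix hs (chain_ne_nil _) (chain_getLast _)
      subst hy
      obtain ⟨t, ht⟩ := hs
      have ht2 : (t ++ (a :: l')) ++ [AGVert.node j p tl] =
          chain p ++ [AGVert.node j p tl] := by
        rw [show chain p ++ [AGVert.node j p tl] = chain (AGVert.node j p tl) from rfl, ← ht]
        simp
      have ht3 := List.append_cancel_right ht2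
      have := depth_of_suffix p a l' ⟨t, ht3⟩
      simp only [List.length_append, List.length_cons, List.length_nil, AGdepth]
      omega

/-- The suffix of the ancestor chain of `v` of length `c+1`. -/
def pSub (v : AGVert) (c : ℕ) : List AGVert := (chain v).drop (AGdepth v - c)

def pa (v : AGVert) (c : ℕ) : AGVert := (pSub v c).headD .root

def pl (v : AGVert) (c : ℕ) : List AGVert := (pSub v c).tail

theorem pSub_length {v : AGVert} {c : ℕ} (hc : c ≤ AGdepth v) :
    (pSub v c).length = c + 1 := by
  rw [pSub, List.length_drop, chain_length]
  omega

theorem pSub_cons {v : AGVert} {c : ℕ} (hc : c ≤ AGdepth v) :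
    pa v c :: pl v c = pSub v c := by
  have := pSub_length hc
  cases h : pSub v c with
  | nil => rw [h] at this; simp at this
  | cons x xs => rw [pa, pl, h]; rfl

theorem pSub_suffix (v : AGVert) (c : ℕ) : pSub v c <:+ chain v :=
  List.drop_suffix _ _

theorem pl_length {v : AGVert} {c : ℕ} (hc : c ≤ AGdepth v) : (pl v c).length = c := by
  have h1 := pSub_length hc
  have h2 := pSub_cons hc
  rw [← h2] at h1
  simpa using h1

theorem pSub_eq_of_suffix {v a : AGVert} {l : List AGVert} (hs : (a :: l) <:+ chain v) :
    pSub v l.length = a :: l := by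
  obtain ⟨t, ht⟩ := hs
  have hlen := congrArg List.length ht
  simp [chain_length] at hlen
  have hd : AGdepth v - l.length = t.length := by omega
  rw [pSub, hd, ← ht, List.drop_left]

def wsrc : AGVert → AGVert
  | .root => .root
  | .node _ a _ => a

def wtl : AGVert → List AGVert
  | .root => []
  | .node _ _ l => l

theorem leaf_struct {k : ℕ} {w : AGVert} (hl : w.label = k + 1) :
    w = AGVert.node (k+1) (wsrc w) (wtl w) := by
  cases w with
  | root => exact absurd hl (by simp [AGVert.label])
  | node j a l =>
    have : j = k + 1 := hl
    rw [this]; rfl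

theorem leaf_data {k : ℕ} {w : AGVert} (hw : w ∈ (actionGraph (k+1)).1)
    (hl : w.label = k + 1) :
    wsrc w ∈ (actionGraph k).1 ∧ IsPath (actionGraph k).2 (wsrc w) (wtl w) ∧
      (pathLast (wsrc w) (wtl w)).label = k := by
  have h := leaf_struct hl ▸ hw
  obtain ⟨-, h2, h3, h4⟩ := mem_node_iff.mp h
  exact ⟨h2, h3, h4⟩

theorem leaf_last_mem {k : ℕ} {w : AGVert} (hw : w ∈ (actionGraph (k+1)).1)
    (hl : w.label = k + 1) : pathLast (wsrc w) (wtl w) ∈ (actionGraph k).1 := by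
  obtain ⟨h1, h2, -⟩ := leaf_data hw hl
  exact pathLast_mem h1 h2

theorem leaf_suffix {k : ℕ} {w : AGVert} (hw : w ∈ (actionGraph (k+1)).1)
    (hl : w.label = k + 1) :
    (wsrc w :: wtl w) <:+ chain (pathLast (wsrc w) (wtl w)) := by
  obtain ⟨h1, h2, -⟩ := leaf_data hw hl
  exact path_suffix_chain (leaf_last_mem hw hl) h2 rfl

theorem leaf_len_le {k : ℕ} {w : AGVert} (hw : w ∈ (actionGraph (k+1)).1)
    (hl : w.label = k + 1) :
    (wtl w).length ≤ AGdepth (pathLast (wsrc w) (wtl w)) := by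
  have := depth_of_suffix _ _ _ (leaf_suffix hw hl)
  omega

theorem leaf_depth {k : ℕ} {w : AGVert} (hw : w ∈ (actionGraph (k+1)).1)
    (hl : w.label = k + 1) :
    AGdepth w = AGdepth (pathLast (wsrc w) (wtl w)) - (wtl w).length + 1 := by
  have h1 := depth_of_suffix _ _ _ (leaf_suffix hw hl)
  have h2 : AGdepth w = AGdepth (wsrc w) + 1 := by
    rw [leaf_struct hl]; rfl
  omega

theorem nodeMem {k : ℕ} {v : AGVert} {c : ℕ} (hv : v ∈ (actionGraph k).1)
    (hvl : v.label = k) (hc : c ≤ AGdepth v) :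
    AGVert.node (k+1) (pa v c) (pl v c) ∈ (actionGraph (k+1)).1 ∧
      pathLast (pa v c) (pl v c) = v := by
  have hsuf : pa v c :: pl v c <:+ chain v := pSub_cons hc ▸ pSub_suffix v c
  have hmem : pa v c ∈ (actionGraph k).1 :=
    chain_mem hv _ (hsuf.subset List.mem_cons_self)
  obtain ⟨hpath, hlast⟩ := isPath_suffix hv hsuf
  exact ⟨mem_node_iff.mpr ⟨le_refl _, hmem, hpath, by rw [hlast, hvl]⟩, hlast⟩

end AGP


section Main

open AGP

/-- The set of leaves of `A k`. -/
abbrev L (k : ℕ) := {v : AGVert // v ∈ (actionGraph k).1 ∧ v.label = k}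

/-- Binary trees with `k` internal nodes. -/
abbrev BS (k : ℕ) := {b : B // B.bsize b = k}

def vOf (k : ℕ) (w : L (k+1)) : L k :=
  ⟨pathLast (wsrc w.1) (wtl w.1), leaf_last_mem w.2.1 w.2.2, (leaf_data w.2.1 w.2.2).2.2⟩

def stepTo (k : ℕ) (e : L k ≃ BS k) (he : ∀ v, B.brlen (e v).1 = AGdepth v.1)
    (w : L (k+1)) : BS (k+1) :=
  ⟨B.batt (AGdepth (vOf k w).1 - (wtl w.1).length) (e (vOf k w)).1, by
    rw [B.bsize_batt _ _ (by rw [he]; exact Nat.sub_le _ _), (e (vOf k w)).2]⟩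

theorem stepInv_aux1 (k : ℕ) (b : BS (k+1)) : b.1 ≠ B.nil := by
  intro h
  have := b.2
  rw [h] at this
  simp [B.bsize] at this

theorem stepInv_aux2 (k : ℕ) (b : BS (k+1)) : B.bsize (B.bdet b.1).2 = k := by
  have h1 := B.bsize_bdet b.1 (stepInv_aux1 k b)
  have h2 := b.2
  omega

def stepInv (k : ℕ) (e : L k ≃ BS k) (b : BS (k+1)) : L (k+1) :=
  ⟨AGVert.node (k+1)
      (pa (e.symm ⟨(B.bdet b.1).2, stepInv_aux2 k b⟩).1
        (AGdepth (e.symm ⟨(B.bdet b.1).2, stepInv_aux2 k b⟩).1 - (B.bdet b.1).1))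
      (pl (e.symm ⟨(B.bdet b.1).2, stepInv_aux2 k b⟩).1
        (AGdepth (e.symm ⟨(B.bdet b.1).2, stepInv_aux2 k b⟩).1 - (B.bdet b.1).1)),
    (nodeMem (e.symm ⟨(B.bdet b.1).2, stepInv_aux2 k b⟩).2.1
      (e.symm ⟨(B.bdet b.1).2, stepInv_aux2 k b⟩).2.2 (Nat.sub_le _ _)).1, rfl⟩

theorem step (k : ℕ) (e : L k ≃ BS k) (he : ∀ v, B.brlen (e v).1 = AGdepth v.1) :
    ∃ e' : L (k+1) ≃ BS (k+1), ∀ w, B.brlen (e' w).1 = AGdepth w.1 := by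
  have hto : ∀ w, B.brlen (stepTo k e he w).1 = AGdepth w.1 := by
    intro w
    have hle : AGdepth (vOf k w).1 - (wtl w.1).length ≤ B.brlen (e (vOf k w)).1 := by
      rw [he]; exact Nat.sub_le _ _
    have hlen := leaf_len_le w.2.1 w.2.2
    have hdep := leaf_depth w.2.1 w.2.2
    have hv1 : AGdepth (vOf k w).1 = AGdepth (pathLast (wsrc w.1) (wtl w.1)) := rfl
    simp only [stepTo]
    rw [B.brlen_batt _ _ hle]
    omega
  refine ⟨⟨stepTo k e he, stepInv k e, ?_, ?_⟩, hto⟩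
  · -- left inverse
    intro w
    apply Subtype.ext
    have hle : AGdepth (vOf k w).1 - (wtl w.1).length ≤ B.brlen (e (vOf k w)).1 := by
      rw [he]; exact Nat.sub_le _ _
    have hbd : B.bdet (stepTo k e he w).1 =
        (AGdepth (vOf k w).1 - (wtl w.1).length, (e (vOf k w)).1) := by
      simp only [stepTo]
      exact B.bdet_batt _ _ hle
    have harg : ∀ hx : B.bsize (B.bdet (stepTo k e he w).1).2 = k,
        (⟨(B.bdet (stepTo k e he w).1).2, hx⟩ : BS k) = e (vOf k w) := by
      intro hx
      apply Subtype.ext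
      show (B.bdet (stepTo k e he w).1).2 = (e (vOf k w)).1
      rw [hbd]
    simp only [stepInv]
    simp only [harg, hbd, Subtype.coe_eta, Equiv.symm_apply_apply]
    have hlen : AGdepth (vOf k w).1 -
        (AGdepth (vOf k w).1 - (wtl w.1).length) = (wtl w.1).length := by
      have h5 := leaf_len_le w.2.1 w.2.2
      have hv1 : AGdepth (vOf k w).1 = AGdepth (pathLast (wsrc w.1) (wtl w.1)) := rfl
      omega
    rw [hlen]
    have hps : pSub (vOf k w).1 (wtl w.1).length = wsrc w.1 :: wtl w.1 :=
      pSub_eq_of_suffix (leaf_suffix w.2.1 w.2.2)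
    rw [pa, pl, hps]
    exact (leaf_struct w.2.2).symm
  · -- right inverse
    intro b
    apply Subtype.ext
    have hbn := stepInv_aux1 k b
    obtain ⟨hple, hbatt, -⟩ := B.batt_bdet b.1 hbn (B.bdet b.1).1 (B.bdet b.1).2 rfl
    set v := e.symm ⟨(B.bdet b.1).2, stepInv_aux2 k b⟩ with hv
    have hbr : B.brlen (B.bdet b.1).2 = AGdepth v.1 := by
      have := he v
      rw [hv, Equiv.apply_symm_apply] at this
      exact this
    have hc : AGdepth v.1 - (B.bdet b.1).1 ≤ AGdepth v.1 := Nat.sub_le _ _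
    have hnm := nodeMem v.2.1 v.2.2 hc
    have h1 : vOf k (stepInv k e b) = v := Subtype.ext hnm.2
    simp only [stepTo]
    rw [h1]
    have h2 : (e v).1 = (B.bdet b.1).2 := by rw [hv, Equiv.apply_symm_apply]
    rw [h2]
    have h3 : wtl (stepInv k e b).1 = pl v.1 (AGdepth v.1 - (B.bdet b.1).1) := rfl
    rw [h3, pl_length hc]
    have h4 : AGdepth v.1 - (AGdepth v.1 - (B.bdet b.1).1) = (B.bdet b.1).1 := by
      omega
    rw [h4]
    exact hbatt

def e0 : L 0 ≃ BS 0 where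
  toFun _ := ⟨B.nil, rfl⟩
  invFun _ := ⟨AGVert.root, Set.mem_singleton _, rfl⟩
  left_inv v := Subtype.ext (Set.eq_of_mem_singleton v.2.1).symm
  right_inv b := Subtype.ext (by
    have hb := b.2
    cases h : b.1 with
    | nil => rfl
    | br l r => rw [h] at hb; simp [B.bsize] at hb)

theorem key : ∀ k, ∃ e : L k ≃ BS k, ∀ v, B.brlen (e v).1 = AGdepth v.1
  | 0 => ⟨e0, by
      intro v
      have hr : v.1 = AGVert.root := Set.eq_of_mem_singleton v.2.1
      show B.brlen B.nil = AGdepth v.1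
      rw [hr]
      rfl⟩
  | k + 1 => by
    obtain ⟨e, he⟩ := key k
    exact step k e he

end Main

/-- There is a bijection between the set of leaves of the action graph `A k` (the
vertices of `A k` labeled `k`) and the set of planar rooted trees with `k` edges. -/
theorem stmt_2 (k : ℕ) :
    Nonempty ({v : AGVert // v ∈ (actionGraph k).1 ∧ v.label = k} ≃
      {t : PlanarRootedTree // t.numEdges = k}) := by
  obtain ⟨e, -⟩ := key k
  exact ⟨e.trans (Bridge.subEquiv k).symm⟩
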